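/- Let 0 < s < 2, T > 0, and α = 1/2 − s/4. There exists a constant C > 0, depending only on s and T, such that for all continuous maps f, g : (0,T) → L²(ℝ) ∩ L⁴(ℝ) with sup_{t∈(0,T)} t^α ‖f(t)‖_{L⁴} < ∞ and sup_{t∈(0,T)} t^α ‖g(t)‖_{L⁴} < ∞, one has sup_{t∈(0,T)} t^α ∫₀ᵗ ‖S(t−t′)(f(t′)g(t′))‖_{L⁴(ℝ)} dt′ ≤ C · sup_{t∈(0,T)} ( t^{2α} ‖f(t)‖_{L⁴} ‖g(t)‖_{L⁴} ). -/

import Mathlib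

noncomputable section

open MeasureTheory Real Filter ENNReal

/-- The Fourier transform on `ℝ`, normalized so that Plancherel's theorem holds
(`‖𝓕 φ‖_{L²} = ‖φ‖_{L²}`). -/
def FT (f : ℝ → ℂ) (ξ : ℝ) : ℂ :=
  (((2 * π) ^ (-(1 / 2 : ℝ)) : ℝ) : ℂ) * ∫ x : ℝ, Complex.exp (-(Complex.I * x * ξ)) * f x

/-- The Gaussian heat kernel on `ℝ`. -/
def heatKernel (t x : ℝ) : ℝ :=
  (4 * π * t) ^ (-(1 / 2 : ℝ)) * Real.exp (-(x ^ 2) / (4 * t))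

/-- The heat semigroup `S(t)`: convolution with the Gaussian heat kernel for `t > 0`,
the identity for `t ≤ 0`.  For `φ ∈ L²` this agrees with the Fourier multiplier with
symbol `e^{-tξ²}`. -/
def heatS (t : ℝ) (φ : ℝ → ℂ) : ℝ → ℂ :=
  if t ≤ 0 then φ else fun x => ∫ y : ℝ, (heatKernel t (x - y) : ℂ) * φ y

/-- The homogeneous Sobolev norm `‖u‖_{Ḣˢ}`, valued in `ℝ≥0∞`. -/
def hNorm (s : ℝ) (u : ℝ → ℂ) : ℝ≥0∞ :=
  (∫⁻ ξ : ℝ, ENNReal.ofReal (|ξ| ^ (2 * s) * ‖FT u ξ‖ ^ 2)) ^ (1 / 2 : ℝ)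

/-- The `Xˢ` norm on functions `u : (0,T) → L²(ℝ)`, with time weight `α = 1/2 - s/4`. -/
def XNorm (s T : ℝ) (u : ℝ → ℝ → ℂ) : ℝ≥0∞ :=
  (⨆ t ∈ Set.Ioo (0 : ℝ) T, hNorm s (u t)) +
    ⨆ t ∈ Set.Ioo (0 : ℝ) T, ENNReal.ofReal (t ^ (1 / 2 - s / 4 : ℝ)) * eLpNorm (u t) 4 volume

/-- `u` is a continuous map from `(0,T)` into `L²(ℝ) ∩ L⁴(ℝ)`. -/
def ContL2L4 (T : ℝ) (u : ℝ → ℝ → ℂ) : Prop :=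
  (∀ t ∈ Set.Ioo (0 : ℝ) T, MemLp (u t) 2 volume ∧ MemLp (u t) 4 volume) ∧
    ∀ t ∈ Set.Ioo (0 : ℝ) T,
      Filter.Tendsto
        (fun t' => eLpNorm (u t' - u t) 2 volume + eLpNorm (u t' - u t) 4 volume)
        (nhdsWithin t (Set.Ioo (0 : ℝ) T)) (nhds 0)

/-- The Duhamel term `t ↦ ∫₀ᵗ S(t-t') w(t') dt'` (the Bochner integral in `L²`,
realized pointwise in `x`). -/
def duhamel (w : ℝ → ℝ → ℂ) (t : ℝ) (x : ℝ) : ℂ :=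
  ∫ t' in Set.Ioo (0 : ℝ) t, heatS (t - t') (w t') x

/-- A mild solution on `(0,T)` of the Kermack–McKendrick system with parameter `μ`
and initial data `(φ, ψ)`. -/
def IsMildSolution (μ T : ℝ) (φ ψ : ℝ → ℂ) (u v : ℝ → ℝ → ℂ) : Prop :=
  ContL2L4 T u ∧ ContL2L4 T v ∧
    (∀ t ∈ Set.Ioo (0 : ℝ) T,
      u t =ᵐ[volume] fun x => heatS t φ x - duhamel (fun t' y => u t' y * v t' y) t x) ∧
    ∀ t ∈ Set.Ioo (0 : ℝ) T,
      v t =ᵐ[volume] fun x =>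
        heatS t ψ x + duhamel (fun t' y => u t' y * v t' y - (μ : ℂ) * v t' y) t x

namespace BilinearAux

lemma heatKernel_nonneg {t : ℝ} (ht : 0 < t) (x : ℝ) : 0 ≤ heatKernel t x := by
  unfold heatKernel
  have h : (0:ℝ) < 4 * π * t := by positivity
  positivity

lemma heatKernel_measurable (t : ℝ) : Measurable (heatKernel t) := by
  unfold heatKernel; fun_prop

lemma gauss_mass {t : ℝ} (ht : 0 < t) : ∫⁻ x : ℝ, ENNReal.ofReal (heatKernel t x) = 1 := by
  have hb : 0 < (4 * t)⁻¹ := by positivity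
  have h4πt : 0 < 4 * π * t := by positivity
  have heq : (fun x : ℝ => heatKernel t x)
      = fun x => (4 * π * t) ^ (-(1/2 : ℝ)) * Real.exp (-(4*t)⁻¹ * x ^ 2) := by
    funext x
    unfold heatKernel
    rw [show -(x^2)/(4*t) = -(4*t)⁻¹ * x ^ 2 by ring]
  have hint : Integrable (fun x : ℝ => heatKernel t x) := by
    rw [heq]
    exact (integrable_exp_neg_mul_sq hb).const_mul _
  have hI : ∫ x : ℝ, heatKernel t x = 1 := by
    rw [heq, integral_const_mul, integral_gaussian]
    rw [show π / (4*t)⁻¹ = 4 * π * t by field_simp]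
    rw [Real.sqrt_eq_rpow, ← Real.rpow_add h4πt]
    norm_num
  rw [← ofReal_integral_eq_lintegral_ofReal hint
    (Filter.Eventually.of_forall (heatKernel_nonneg ht)), hI, ENNReal.ofReal_one]

lemma gauss_sq {t : ℝ} (ht : 0 < t) :
    ∫⁻ x : ℝ, ENNReal.ofReal (heatKernel t x) ^ (2:ℝ) ≤ ENNReal.ofReal (t ^ (-(1/2) : ℝ)) := by
  have h4πt : 0 < 4 * π * t := by positivity
  have hb : 0 < (2*t)⁻¹ := by positivity
  have hsq : ∀ x : ℝ, heatKernel t x ^ (2:ℕ) = (4*π*t)⁻¹ * Real.exp (-(2*t)⁻¹ * x^2) := by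
    intro x
    have h1 : heatKernel t x ^ (2:ℕ) = ((4*π*t) ^ (-(1/2):ℝ) * (4*π*t) ^ (-(1/2):ℝ)) *
        (Real.exp (-(x^2)/(4*t)) * Real.exp (-(x^2)/(4*t))) := by
      unfold heatKernel; ring
    rw [h1, ← Real.rpow_add h4πt, ← Real.exp_add,
      show (-(1/2:ℝ) + -(1/2:ℝ)) = (-1:ℝ) by norm_num, Real.rpow_neg_one]
    congr 1
    field_simp
    ring
  have heq : (fun x : ℝ => ENNReal.ofReal (heatKernel t x) ^ (2:ℝ))
      = fun x => ENNReal.ofReal ((4*π*t)⁻¹ * Real.exp (-(2*t)⁻¹ * x^2)) := by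
    funext x
    rw [ENNReal.ofReal_rpow_of_nonneg (heatKernel_nonneg ht x) (by norm_num),
      show (heatKernel t x) ^ (2:ℝ) = (heatKernel t x) ^ (2:ℕ) from by
        rw [← Real.rpow_natCast (heatKernel t x) 2]; norm_num, hsq x]
  rw [heq, ← ofReal_integral_eq_lintegral_ofReal
    ((integrable_exp_neg_mul_sq hb).const_mul _)
    (Filter.Eventually.of_forall fun x => by positivity)]
  apply ENNReal.ofReal_le_ofReal
  rw [integral_const_mul, integral_gaussian,
    show π / (2*t)⁻¹ = 2*π*t by field_simp]
  -- (4πt)⁻¹ * √(2πt) ≤ t^(-(1/2))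
  rw [Real.rpow_neg ht.le, ← Real.sqrt_eq_rpow]
  have ha : (0:ℝ) ≤ Real.sqrt (2*π*t) := Real.sqrt_nonneg _
  have hb' : 0 < Real.sqrt t := Real.sqrt_pos.2 ht
  have ha2 : Real.sqrt (2*π*t) ^ 2 = 2*π*t := Real.sq_sqrt (by positivity)
  have hb2 : Real.sqrt t ^ 2 = t := Real.sq_sqrt ht.le
  rw [inv_mul_eq_div, ← one_div, div_le_div_iff₀ h4πt hb']
  nlinarith [sq_nonneg (Real.sqrt (2*π*t) - Real.sqrt t), Real.pi_gt_three]

lemma smoothing_core {τ : ℝ} (hτ : 0 < τ) {h : ℝ → ℂ} (hm : Measurable h) :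
    eLpNorm (heatS τ h) 4 volume ≤
      ENNReal.ofReal (τ ^ (-(1/8) : ℝ)) * eLpNorm h 2 volume := by
  set G : ℝ → ℝ := heatKernel τ with hG
  set Ge : ℝ → ℝ≥0∞ := fun x => ENNReal.ofReal (G x) with hGe
  have hGe_m : Measurable Ge := (heatKernel_measurable τ).ennreal_ofReal
  set J : ℝ≥0∞ := ∫⁻ y : ℝ, (‖h y‖₊ : ℝ≥0∞) ^ (2:ℝ) with hJ
  set K : ℝ≥0∞ := (∫⁻ y : ℝ, Ge y ^ (2:ℝ)) ^ (1/2:ℝ) with hK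
  have hu : heatS τ h = fun x => ∫ y : ℝ, (G (x - y) : ℂ) * h y := by
    unfold heatS; rw [if_neg (not_le.mpr hτ)]
  have conj : Real.HolderConjugate 2 2 := Real.HolderConjugate.two_two
  have hGe_sub : ∀ x : ℝ, Measurable (fun y => Ge (x - y)) :=
    fun x => hGe_m.comp (measurable_const.sub measurable_id)
  -- pointwise bound by the convolution of nonnegative functions
  have pw1 : ∀ x : ℝ, (‖heatS τ h x‖₊ : ℝ≥0∞) ≤ ∫⁻ y, Ge (x - y) * (‖h y‖₊ : ℝ≥0∞) := by
    intro x
    rw [hu]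
    refine (enorm_integral_le_lintegral_enorm _).trans (le_of_eq ?_)
    refine lintegral_congr fun y => ?_
    rw [enorm_mul, ← ofReal_norm, Complex.norm_real,
      Real.norm_of_nonneg (heatKernel_nonneg hτ _)]; rfl
  -- translation invariance of the Gaussian integrals
  have trans1 : ∀ x : ℝ, ∫⁻ y, Ge (x - y) = 1 := by
    intro x
    rw [(Measure.measurePreserving_sub_left volume x).lintegral_comp hGe_m]
    exact gauss_mass hτ
  have trans2 : ∀ x : ℝ, ∫⁻ y, Ge (x - y) ^ (2:ℝ) = ∫⁻ y, Ge y ^ (2:ℝ) := by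
    intro x
    exact (Measure.measurePreserving_sub_left volume x).lintegral_comp
      (hGe_m.pow_const _)
  -- first Cauchy–Schwarz bound
  have bound1 : ∀ x : ℝ, (∫⁻ y, Ge (x - y) * (‖h y‖₊ : ℝ≥0∞)) ≤ K * J ^ (1/2:ℝ) := by
    intro x
    have := ENNReal.lintegral_mul_le_Lp_mul_Lq volume conj
      (f := fun y => Ge (x - y)) (g := fun y => (‖h y‖₊ : ℝ≥0∞))
      (hGe_sub x).aemeasurable hm.enorm.aemeasurable
    simp only [Pi.mul_apply] at this
    refine this.trans (le_of_eq ?_)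
    rw [trans2 x, ← hJ, ← hK]
  -- second Cauchy–Schwarz bound
  have bound2 : ∀ x : ℝ, (∫⁻ y, Ge (x - y) * (‖h y‖₊ : ℝ≥0∞)) ^ (2:ℝ)
      ≤ ∫⁻ y, Ge (x - y) * (‖h y‖₊ : ℝ≥0∞) ^ (2:ℝ) := by
    intro x
    have h1 : (fun y : ℝ => Ge (x - y) * (‖h y‖₊ : ℝ≥0∞))
        = fun y => (Ge (x - y)) ^ (1/2:ℝ) * ((Ge (x - y)) ^ (1/2:ℝ) * (‖h y‖₊ : ℝ≥0∞)) := by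
      funext y
      rw [← mul_assoc, ← ENNReal.rpow_add_of_nonneg _ _ (by norm_num) (by norm_num)]
      norm_num
    have h2 := ENNReal.lintegral_mul_le_Lp_mul_Lq volume conj
      (f := fun y => (Ge (x - y)) ^ (1/2:ℝ))
      (g := fun y => (Ge (x - y)) ^ (1/2:ℝ) * (‖h y‖₊ : ℝ≥0∞))
      ((hGe_sub x).pow_const _).aemeasurable
      (((hGe_sub x).pow_const _).mul hm.enorm).aemeasurable
    simp only [Pi.mul_apply] at h2
    rw [← h1] at h2
    have e1 : ∀ z : ℝ≥0∞, (z ^ (1/2:ℝ)) ^ (2:ℝ) = z := by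
      intro z; rw [← ENNReal.rpow_mul]; norm_num
    have h3 : (∫⁻ y, ((Ge (x - y)) ^ (1/2:ℝ)) ^ (2:ℝ)) = 1 := by
      rw [lintegral_congr fun y => e1 (Ge (x - y))]; exact trans1 x
    have h4 : (fun y : ℝ => ((Ge (x - y)) ^ (1/2:ℝ) * (‖h y‖₊ : ℝ≥0∞)) ^ (2:ℝ))
        = fun y => Ge (x - y) * (‖h y‖₊ : ℝ≥0∞) ^ (2:ℝ) := by
      funext y
      rw [ENNReal.mul_rpow_of_nonneg _ _ (by norm_num), e1]
    rw [h3, h4] at h2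
    calc (∫⁻ y, Ge (x - y) * (‖h y‖₊ : ℝ≥0∞)) ^ (2:ℝ)
        ≤ ((1:ℝ≥0∞) ^ (1/2:ℝ) * (∫⁻ y, Ge (x - y) * (‖h y‖₊ : ℝ≥0∞) ^ (2:ℝ)) ^ (1/2:ℝ)) ^ (2:ℝ) :=
          ENNReal.rpow_le_rpow h2 (by norm_num)
      _ = ∫⁻ y, Ge (x - y) * (‖h y‖₊ : ℝ≥0∞) ^ (2:ℝ) := by
          rw [ENNReal.one_rpow, one_mul, e1]
  -- fourth power bound
  have pw4 : ∀ x : ℝ, (‖heatS τ h x‖₊ : ℝ≥0∞) ^ (4:ℝ)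
      ≤ (K * J ^ (1/2:ℝ)) ^ (2:ℝ) * ∫⁻ y, Ge (x - y) * (‖h y‖₊ : ℝ≥0∞) ^ (2:ℝ) := by
    intro x
    have e4 : (‖heatS τ h x‖₊ : ℝ≥0∞) ^ (4:ℝ)
        = (‖heatS τ h x‖₊ : ℝ≥0∞) ^ (2:ℝ) * (‖heatS τ h x‖₊ : ℝ≥0∞) ^ (2:ℝ) := by
      rw [← ENNReal.rpow_add_of_nonneg _ _ (by norm_num) (by norm_num)]; norm_num
    rw [e4]
    have b1 : (‖heatS τ h x‖₊ : ℝ≥0∞) ^ (2:ℝ) ≤ (K * J ^ (1/2:ℝ)) ^ (2:ℝ) :=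
      ENNReal.rpow_le_rpow ((pw1 x).trans (bound1 x)) (by norm_num)
    have b2 : (‖heatS τ h x‖₊ : ℝ≥0∞) ^ (2:ℝ) ≤ ∫⁻ y, Ge (x - y) * (‖h y‖₊ : ℝ≥0∞) ^ (2:ℝ) :=
      (ENNReal.rpow_le_rpow (pw1 x) (by norm_num)).trans (bound2 x)
    exact mul_le_mul' b1 b2
  -- Tonelli
  have tonelli : ∫⁻ x, ∫⁻ y, Ge (x - y) * (‖h y‖₊ : ℝ≥0∞) ^ (2:ℝ) = J := by
    have hmeas : AEMeasurable (Function.uncurry fun x y =>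
        Ge (x - y) * (‖h y‖₊ : ℝ≥0∞) ^ (2:ℝ)) ((volume : Measure ℝ).prod volume) := by
      apply Measurable.aemeasurable
      apply Measurable.mul
      · exact hGe_m.comp (measurable_fst.sub measurable_snd)
      · exact (hm.enorm.pow_const _).comp measurable_snd
    rw [lintegral_lintegral_swap hmeas]
    have : ∀ y : ℝ, ∫⁻ x, Ge (x - y) * (‖h y‖₊ : ℝ≥0∞) ^ (2:ℝ)
        = (‖h y‖₊ : ℝ≥0∞) ^ (2:ℝ) := by
      intro y
      rw [lintegral_mul_const (f := fun x => Ge (x - y)) _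
        (hGe_m.comp (measurable_id.sub measurable_const)),
        (measurePreserving_sub_right volume y).lintegral_comp hGe_m, gauss_mass hτ, one_mul]
    rw [lintegral_congr this]
  -- assembling
  have main4 : ∫⁻ x, (‖heatS τ h x‖₊ : ℝ≥0∞) ^ (4:ℝ) ≤ (K * J ^ (1/2:ℝ)) ^ (2:ℝ) * J := by
    calc ∫⁻ x, (‖heatS τ h x‖₊ : ℝ≥0∞) ^ (4:ℝ)
        ≤ ∫⁻ x, (K * J ^ (1/2:ℝ)) ^ (2:ℝ) * ∫⁻ y, Ge (x - y) * (‖h y‖₊ : ℝ≥0∞) ^ (2:ℝ) :=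
          lintegral_mono pw4
      _ = (K * J ^ (1/2:ℝ)) ^ (2:ℝ) * ∫⁻ x, ∫⁻ y, Ge (x - y) * (‖h y‖₊ : ℝ≥0∞) ^ (2:ℝ) := by
          rw [lintegral_const_mul]
          apply Measurable.lintegral_prod_right
          apply Measurable.mul
          · exact hGe_m.comp (measurable_fst.sub measurable_snd)
          · exact (hm.enorm.pow_const _).comp measurable_snd
      _ = (K * J ^ (1/2:ℝ)) ^ (2:ℝ) * J := by rw [tonelli]
  have hA : eLpNorm h 2 volume = J ^ (1/2:ℝ) := by
    rw [eLpNorm_eq_lintegral_rpow_enorm_toReal (by norm_num) (by norm_num), hJ]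
    norm_num
    rfl
  have hL4 : eLpNorm (heatS τ h) 4 volume
      = (∫⁻ x, (‖heatS τ h x‖₊ : ℝ≥0∞) ^ (4:ℝ)) ^ (1/4:ℝ) := by
    rw [eLpNorm_eq_lintegral_rpow_enorm_toReal (by norm_num) (by norm_num)]
    norm_num
    rfl
  have hQbound : (∫⁻ y : ℝ, Ge y ^ (2:ℝ)) ^ (1/4:ℝ) ≤ ENNReal.ofReal (τ ^ (-(1/8) : ℝ)) := by
    refine (ENNReal.rpow_le_rpow (gauss_sq hτ) (by norm_num : (0:ℝ) ≤ 1/4)).trans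
      (le_of_eq ?_)
    rw [ENNReal.ofReal_rpow_of_pos (Real.rpow_pos_of_pos hτ _), ← Real.rpow_mul hτ.le]
    norm_num
  have hsq2 : (K * J ^ (1/2:ℝ)) ^ (2:ℝ) = (∫⁻ y : ℝ, Ge y ^ (2:ℝ)) * J := by
    rw [ENNReal.mul_rpow_of_nonneg _ _ (show (0:ℝ) ≤ 2 by norm_num), hK,
      ← ENNReal.rpow_mul, ← ENNReal.rpow_mul]
    norm_num
  rw [hsq2] at main4
  calc eLpNorm (heatS τ h) 4 volume
      = (∫⁻ x, (‖heatS τ h x‖₊ : ℝ≥0∞) ^ (4:ℝ)) ^ (1/4:ℝ) := hL4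
    _ ≤ ((∫⁻ y : ℝ, Ge y ^ (2:ℝ)) * J * J) ^ (1/4:ℝ) :=
        ENNReal.rpow_le_rpow main4 (by norm_num)
    _ = (∫⁻ y : ℝ, Ge y ^ (2:ℝ)) ^ (1/4:ℝ) * (J ^ (1/4:ℝ) * J ^ (1/4:ℝ)) := by
        rw [ENNReal.mul_rpow_of_nonneg _ _ (show (0:ℝ) ≤ 1/4 by norm_num),
          ENNReal.mul_rpow_of_nonneg _ _ (show (0:ℝ) ≤ 1/4 by norm_num), mul_assoc]
    _ = (∫⁻ y : ℝ, Ge y ^ (2:ℝ)) ^ (1/4:ℝ) * J ^ (1/2:ℝ) := by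
        rw [← ENNReal.rpow_add_of_nonneg _ _ (by norm_num) (by norm_num)]
        norm_num
    _ ≤ ENNReal.ofReal (τ ^ (-(1/8) : ℝ)) * eLpNorm h 2 volume := by
        rw [hA]
        exact mul_le_mul_left hQbound _

lemma smoothing {τ : ℝ} (hτ : 0 < τ) {h : ℝ → ℂ} (hm : AEStronglyMeasurable h volume) :
    eLpNorm (heatS τ h) 4 volume ≤
      ENNReal.ofReal (τ ^ (-(1/8) : ℝ)) * eLpNorm h 2 volume := by
  have hae := hm.ae_eq_mk
  have heq : heatS τ h = heatS τ (hm.mk h) := by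
    unfold heatS
    rw [if_neg (not_le.mpr hτ), if_neg (not_le.mpr hτ)]
    funext x
    exact integral_congr_ae (hae.mono fun y hy => by dsimp only; rw [hy])
  rw [heq, eLpNorm_congr_ae hae]
  exact smoothing_core hτ hm.stronglyMeasurable_mk.measurable

lemma holder_prod {f g : ℝ → ℂ} (hf : AEStronglyMeasurable f volume)
    (hg : AEStronglyMeasurable g volume) :
    eLpNorm (fun x => f x * g x) 2 volume ≤ eLpNorm f 4 volume * eLpNorm g 4 volume := by
  have h24 : (1:ℝ≥0∞)/2 = 1/4 + 1/4 := by
    rw [ENNReal.div_add_div_same]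
    rw [show ((1:ℝ≥0∞)+1) = 2*1 from by norm_num, show (4:ℝ≥0∞) = 2*2 from by norm_num,
      ENNReal.mul_div_mul_left 1 2 (by norm_num) (by norm_num)]
  haveI : ENNReal.HolderTriple 4 4 2 := ⟨by simpa [one_div] using h24.symm⟩
  have := eLpNorm_smul_le_mul_eLpNorm (p := 4) (q := 4) (r := 2) hg hf
  exact (by simpa [Pi.smul_apply, smul_eq_mul] using this : eLpNorm (f * g) 2 volume ≤ _)

lemma lint_rpow {t r : ℝ} (ht : 0 < t) (hr : -1 < r) :
    ∫⁻ x in Set.Ioo 0 t, ENNReal.ofReal (x ^ r) = ENNReal.ofReal (t ^ (r+1) / (r+1)) := by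
  have hint : IntervalIntegrable (fun x : ℝ => x ^ r) volume 0 t :=
    intervalIntegral.intervalIntegrable_rpow' hr
  have hIoo : IntegrableOn (fun x : ℝ => x ^ r) (Set.Ioo 0 t) volume :=
    ((intervalIntegrable_iff_integrableOn_Ioc_of_le ht.le).mp hint).mono_set
      Set.Ioo_subset_Ioc_self
  rw [← ofReal_integral_eq_lintegral_ofReal hIoo
    ((ae_restrict_iff' measurableSet_Ioo).2 (Filter.Eventually.of_forall
      fun x hx => Real.rpow_nonneg hx.1.le r))]
  congr 1
  rw [← MeasureTheory.integral_Ioc_eq_integral_Ioo, ← intervalIntegral.integral_of_le ht.le,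
    integral_rpow (Or.inl hr), Real.zero_rpow (by linarith : r + 1 ≠ 0), sub_zero]

lemma lint_rpow_sub {t r : ℝ} (ht : 0 < t) (hr : -1 < r) :
    ∫⁻ x in Set.Ioo 0 t, ENNReal.ofReal ((t - x) ^ r) = ENNReal.ofReal (t ^ (r+1) / (r+1)) := by
  have hint : IntervalIntegrable (fun x : ℝ => (t - x) ^ r) volume 0 t := by
    have h := (intervalIntegral.intervalIntegrable_rpow' (a := t) (b := 0) hr).comp_sub_left t
    simpa using h
  have hIoo : IntegrableOn (fun x : ℝ => (t - x) ^ r) (Set.Ioo 0 t) volume :=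
    ((intervalIntegrable_iff_integrableOn_Ioc_of_le ht.le).mp hint).mono_set
      Set.Ioo_subset_Ioc_self
  rw [← ofReal_integral_eq_lintegral_ofReal hIoo
    ((ae_restrict_iff' measurableSet_Ioo).2 (Filter.Eventually.of_forall
      fun x hx => Real.rpow_nonneg (by linarith [hx.2] : (0:ℝ) ≤ t - x) r))]
  congr 1
  rw [← MeasureTheory.integral_Ioc_eq_integral_Ioo, ← intervalIntegral.integral_of_le ht.le,
    intervalIntegral.integral_comp_sub_left (fun x => x ^ r) t]
  simp only [sub_self, sub_zero]
  rw [integral_rpow (Or.inl hr), Real.zero_rpow (by linarith : r + 1 ≠ 0), sub_zero]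

lemma split_bound {t t' a b : ℝ} (h0 : 0 < t') (h1 : t' < t) (ha : a ≤ 0) (hb : b ≤ 0) :
    (t - t') ^ a * t' ^ b ≤ (t/2) ^ a * t' ^ b + (t/2) ^ b * (t - t') ^ a := by
  have ht : 0 < t := lt_trans h0 h1
  rcases le_or_gt t' (t/2) with hc | hc
  · have h2 : (t - t') ^ a ≤ (t/2) ^ a :=
      Real.rpow_le_rpow_of_nonpos (by linarith) (by linarith) ha
    have h3 : (0:ℝ) ≤ (t/2) ^ b * (t - t') ^ a :=
      mul_nonneg (Real.rpow_nonneg (by linarith) _) (Real.rpow_nonneg (by linarith) _)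
    nlinarith [Real.rpow_nonneg h0.le b]
  · have h2 : t' ^ b ≤ (t/2) ^ b :=
      Real.rpow_le_rpow_of_nonpos (by linarith) hc.le hb
    have h3 : (0:ℝ) ≤ (t/2) ^ a * t' ^ b :=
      mul_nonneg (Real.rpow_nonneg (by linarith) _) (Real.rpow_nonneg h0.le _)
    nlinarith [Real.rpow_nonneg (by linarith : (0:ℝ) ≤ t - t') a]

lemma time_int {t b : ℝ} (ht : 0 < t) (hb1 : -1 < b) (hb0 : b ≤ 0) :
    ∫⁻ t' in Set.Ioo 0 t, ENNReal.ofReal ((t - t') ^ (-(1/8):ℝ)) * ENNReal.ofReal (t' ^ b)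
      ≤ ENNReal.ofReal ((t/2) ^ (-(1/8):ℝ) * (t ^ (b+1) / (b+1))
          + (t/2) ^ b * (t ^ ((-(1/8):ℝ)+1) / ((-(1/8):ℝ)+1))) := by
  have ha : (-(1/8):ℝ) ≤ 0 := by norm_num
  have ht2 : (0:ℝ) ≤ t/2 := by linarith
  have step : ∀ t' ∈ Set.Ioo (0:ℝ) t,
      ENNReal.ofReal ((t - t') ^ (-(1/8):ℝ)) * ENNReal.ofReal (t' ^ b)
        ≤ ENNReal.ofReal ((t/2) ^ (-(1/8):ℝ) * t' ^ b)
          + ENNReal.ofReal ((t/2) ^ b * (t - t') ^ (-(1/8):ℝ)) := by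
    intro t' ht'
    obtain ⟨h0', h1'⟩ := ht'
    calc ENNReal.ofReal ((t - t') ^ (-(1/8):ℝ)) * ENNReal.ofReal (t' ^ b)
        = ENNReal.ofReal ((t - t') ^ (-(1/8):ℝ) * t' ^ b) :=
          (ENNReal.ofReal_mul (Real.rpow_nonneg (by linarith : (0:ℝ) ≤ t - t') _)).symm
      _ ≤ ENNReal.ofReal ((t/2) ^ (-(1/8):ℝ) * t' ^ b + (t/2) ^ b * (t - t') ^ (-(1/8):ℝ)) :=
          ENNReal.ofReal_le_ofReal (split_bound h0' h1' ha hb0)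
      _ = _ := ENNReal.ofReal_add
          (mul_nonneg (Real.rpow_nonneg ht2 _) (Real.rpow_nonneg h0'.le _))
          (mul_nonneg (Real.rpow_nonneg ht2 _)
            (Real.rpow_nonneg (by linarith : (0:ℝ) ≤ t - t') _))
  calc ∫⁻ t' in Set.Ioo 0 t, ENNReal.ofReal ((t - t') ^ (-(1/8):ℝ)) * ENNReal.ofReal (t' ^ b)
      ≤ ∫⁻ t' in Set.Ioo 0 t, (ENNReal.ofReal ((t/2) ^ (-(1/8):ℝ) * t' ^ b)
          + ENNReal.ofReal ((t/2) ^ b * (t - t') ^ (-(1/8):ℝ))) :=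
        setLIntegral_mono (by fun_prop) step
    _ = (∫⁻ t' in Set.Ioo 0 t, ENNReal.ofReal ((t/2) ^ (-(1/8):ℝ) * t' ^ b))
        + ∫⁻ t' in Set.Ioo 0 t, ENNReal.ofReal ((t/2) ^ b * (t - t') ^ (-(1/8):ℝ)) :=
        lintegral_add_left (by fun_prop) _
    _ = ENNReal.ofReal ((t/2) ^ (-(1/8):ℝ)) * ENNReal.ofReal (t ^ (b+1) / (b+1))
        + ENNReal.ofReal ((t/2) ^ b) *
            ENNReal.ofReal (t ^ ((-(1/8):ℝ)+1) / ((-(1/8):ℝ)+1)) := by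
        congr 1
        · simp_rw [ENNReal.ofReal_mul (Real.rpow_nonneg ht2 _)]
          rw [lintegral_const_mul _ (by fun_prop), lint_rpow ht hb1]
        · simp_rw [ENNReal.ofReal_mul (Real.rpow_nonneg ht2 _)]
          rw [lintegral_const_mul _ (by fun_prop), lint_rpow_sub ht (by norm_num)]
    _ = _ := by
        rw [← ENNReal.ofReal_mul (Real.rpow_nonneg ht2 _),
          ← ENNReal.ofReal_mul (Real.rpow_nonneg ht2 _),
          ← ENNReal.ofReal_add
            (mul_nonneg (Real.rpow_nonneg ht2 _)
              (div_nonneg (Real.rpow_nonneg ht.le _) (by linarith)))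
            (mul_nonneg (Real.rpow_nonneg ht2 _)
              (div_nonneg (Real.rpow_nonneg ht.le _) (by norm_num)))]

lemma real_final {s T α t : ℝ} (hs0 : 0 < s) (hs : s < 2) (hα : α = 1/2 - s/4)
    (ht0 : 0 < t) (htT : t ≤ T) :
    t ^ α * ((t/2) ^ (-(1/8):ℝ) * (t ^ (-(2*α)+1) / (-(2*α)+1))
        + (t/2) ^ (-(2*α)) * (t ^ ((-(1/8):ℝ)+1) / ((-(1/8):ℝ)+1)))
      ≤ (2 ^ ((1:ℝ)/8) / (-(2*α)+1) + (8/7) * 2 ^ (2*α)) * T ^ (7/8 - α : ℝ) := by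
  have hb1 : (0:ℝ) < -(2*α)+1 := by rw [hα]; linarith
  have hta : (t/2) ^ (-(1/8):ℝ) = 2 ^ ((1:ℝ)/8) * t ^ (-(1/8):ℝ) := by
    rw [div_rpow ht0.le (by norm_num : (0:ℝ) ≤ 2),
      show ((2:ℝ) ^ (-(1/8):ℝ)) = ((2:ℝ) ^ ((1:ℝ)/8))⁻¹ from by
        rw [← Real.rpow_neg (by norm_num : (0:ℝ) ≤ 2)],
      div_eq_mul_inv, inv_inv]
    exact mul_comm _ _
  have htb : (t/2) ^ (-(2*α)) = 2 ^ (2*α) * t ^ (-(2*α)) := by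
    rw [div_rpow ht0.le (by norm_num : (0:ℝ) ≤ 2),
      Real.rpow_neg (by norm_num : (0:ℝ) ≤ 2) (2*α), div_eq_mul_inv, inv_inv]
    exact mul_comm _ _
  have hcol1 : t ^ α * (t ^ (-(1/8):ℝ) * t ^ (-(2*α)+1)) = t ^ (7/8 - α : ℝ) := by
    rw [← Real.rpow_add ht0, ← Real.rpow_add ht0]
    congr 1; ring
  have hcol2 : t ^ α * (t ^ (-(2*α)) * t ^ ((-(1/8):ℝ)+1)) = t ^ (7/8 - α : ℝ) := by
    rw [← Real.rpow_add ht0, ← Real.rpow_add ht0]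
    congr 1; ring
  have key : t ^ α * ((t/2) ^ (-(1/8):ℝ) * (t ^ (-(2*α)+1) / (-(2*α)+1))
        + (t/2) ^ (-(2*α)) * (t ^ ((-(1/8):ℝ)+1) / ((-(1/8):ℝ)+1)))
      = (2 ^ ((1:ℝ)/8) / (-(2*α)+1) + (8/7) * 2 ^ (2*α)) * t ^ (7/8 - α : ℝ) := by
    rw [hta, htb]
    linear_combination (2 ^ ((1:ℝ)/8) / (-(2*α)+1)) * hcol1 + (8/7) * 2 ^ (2*α) * hcol2
  rw [key]
  have hK : (0:ℝ) ≤ 2 ^ ((1:ℝ)/8) / (-(2*α)+1) + (8/7) * 2 ^ (2*α) :=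
    add_nonneg (div_nonneg (Real.rpow_nonneg (by norm_num) _) hb1.le)
      (mul_nonneg (by norm_num) (Real.rpow_nonneg (by norm_num) _))
  exact mul_le_mul_of_nonneg_left
    (Real.rpow_le_rpow ht0.le htT (by rw [hα]; linarith)) hK

end BilinearAux

/-- The time-weighted `L⁴` part of the bilinear estimate: for
`0 < s < 2`, `T > 0` and `α = 1/2 - s/4`, there is a constant `C = C(s,T) > 0` such that
for all continuous `f, g : (0,T) → L² ∩ L⁴` with finite time-weighted `L⁴` norms,
`sup_{t∈(0,T)} t^α ∫₀ᵗ ‖S(t-t')(f(t')g(t'))‖_{L⁴} dt'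
  ≤ C sup_{t∈(0,T)} t^{2α} ‖f(t)‖_{L⁴} ‖g(t)‖_{L⁴}`. -/
theorem bilinear_L4_piece
    (s T α : ℝ) (hs0 : 0 < s) (hs : s < 2) (hT : 0 < T) (hα : α = 1 / 2 - s / 4) :
    ∃ C : ℝ, 0 < C ∧
      ∀ f g : ℝ → ℝ → ℂ, ContL2L4 T f → ContL2L4 T g →
        (⨆ t ∈ Set.Ioo (0 : ℝ) T, ENNReal.ofReal (t ^ α) * eLpNorm (f t) 4 volume) < ⊤ →
        (⨆ t ∈ Set.Ioo (0 : ℝ) T, ENNReal.ofReal (t ^ α) * eLpNorm (g t) 4 volume) < ⊤ →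
        (⨆ t ∈ Set.Ioo (0 : ℝ) T,
            ENNReal.ofReal (t ^ α) *
              ∫⁻ t' in Set.Ioo (0 : ℝ) t,
                eLpNorm (heatS (t - t') fun x => f t' x * g t' x) 4 volume) ≤
          ENNReal.ofReal C *
            ⨆ t ∈ Set.Ioo (0 : ℝ) T,
              ENNReal.ofReal (t ^ (2 * α)) * (eLpNorm (f t) 4 volume *
                eLpNorm (g t) 4 volume) := by
  have hb1 : (0:ℝ) < -(2*α)+1 := by rw [hα]; linarith
  have hKpos : (0:ℝ) < 2 ^ ((1:ℝ)/8) / (-(2*α)+1) + (8/7) * 2 ^ (2*α) :=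
    add_pos (div_pos (Real.rpow_pos_of_pos two_pos _) hb1)
      (mul_pos (by norm_num) (Real.rpow_pos_of_pos two_pos _))
  refine ⟨(2 ^ ((1:ℝ)/8) / (-(2*α)+1) + (8/7) * 2 ^ (2*α)) * T ^ (7/8 - α : ℝ),
    mul_pos hKpos (Real.rpow_pos_of_pos hT _), ?_⟩
  intro f g hf hg _ _
  set M : ℝ≥0∞ := ⨆ u ∈ Set.Ioo (0:ℝ) T,
    ENNReal.ofReal (u ^ (2*α)) * (eLpNorm (f u) 4 volume * eLpNorm (g u) 4 volume) with hM
  refine iSup₂_le fun t ht => ?_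
  obtain ⟨ht0, htT⟩ := ht
  have key : ∀ t' ∈ Set.Ioo (0:ℝ) t,
      eLpNorm (heatS (t - t') fun x => f t' x * g t' x) 4 volume ≤
        ENNReal.ofReal ((t - t') ^ (-(1/8):ℝ)) * ENNReal.ofReal (t' ^ (-(2*α))) * M := by
    intro t' ht'
    obtain ⟨h0', h1'⟩ := ht'
    have ht'T : t' ∈ Set.Ioo (0:ℝ) T := ⟨h0', h1'.trans htT⟩
    have hmf := (hf.1 t' ht'T).2.aestronglyMeasurable
    have hmg := (hg.1 t' ht'T).2.aestronglyMeasurable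
    rw [mul_assoc]
    refine (BilinearAux.smoothing (by linarith) (hmf.mul hmg)).trans
      (mul_le_mul_right ?_ _)
    refine (BilinearAux.holder_prod hmf hmg).trans ?_
    have hle : ENNReal.ofReal (t' ^ (2*α)) *
        (eLpNorm (f t') 4 volume * eLpNorm (g t') 4 volume) ≤ M :=
      le_iSup₂ (f := fun u (_ : u ∈ Set.Ioo (0:ℝ) T) =>
        ENNReal.ofReal (u ^ (2*α)) *
          (eLpNorm (f u) 4 volume * eLpNorm (g u) 4 volume)) t' ht'T
    calc eLpNorm (f t') 4 volume * eLpNorm (g t') 4 volume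
        = (ENNReal.ofReal (t' ^ (-(2*α))) * ENNReal.ofReal (t' ^ (2*α))) *
            (eLpNorm (f t') 4 volume * eLpNorm (g t') 4 volume) := by
          rw [← ENNReal.ofReal_mul (Real.rpow_nonneg h0'.le _), ← Real.rpow_add h0',
            neg_add_cancel, Real.rpow_zero, ENNReal.ofReal_one, one_mul]
      _ = ENNReal.ofReal (t' ^ (-(2*α))) * (ENNReal.ofReal (t' ^ (2*α)) *
            (eLpNorm (f t') 4 volume * eLpNorm (g t') 4 volume)) := by rw [mul_assoc]
      _ ≤ ENNReal.ofReal (t' ^ (-(2*α))) * M := mul_le_mul_right hle _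
  calc ENNReal.ofReal (t ^ α) * ∫⁻ t' in Set.Ioo (0:ℝ) t,
        eLpNorm (heatS (t - t') fun x => f t' x * g t' x) 4 volume
      ≤ ENNReal.ofReal (t ^ α) * ∫⁻ t' in Set.Ioo (0:ℝ) t,
          ENNReal.ofReal ((t - t') ^ (-(1/8):ℝ)) * ENNReal.ofReal (t' ^ (-(2*α))) * M :=
        mul_le_mul_right (setLIntegral_mono (by fun_prop) key) _
    _ = ENNReal.ofReal (t ^ α) *
        ((∫⁻ t' in Set.Ioo (0:ℝ) t, ENNReal.ofReal ((t - t') ^ (-(1/8):ℝ)) *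
          ENNReal.ofReal (t' ^ (-(2*α)))) * M) := by
        rw [lintegral_mul_const _ (by fun_prop)]
    _ ≤ ENNReal.ofReal (t ^ α) *
        (ENNReal.ofReal ((t/2) ^ (-(1/8):ℝ) * (t ^ (-(2*α)+1) / (-(2*α)+1))
          + (t/2) ^ (-(2*α)) * (t ^ ((-(1/8):ℝ)+1) / ((-(1/8):ℝ)+1))) * M) := by
        refine mul_le_mul_right (mul_le_mul_left
          (BilinearAux.time_int ht0 ?_ ?_) M) _
        · rw [hα]; linarith
        · rw [hα]; linarith
    _ = ENNReal.ofReal (t ^ α * ((t/2) ^ (-(1/8):ℝ) * (t ^ (-(2*α)+1) / (-(2*α)+1))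
          + (t/2) ^ (-(2*α)) * (t ^ ((-(1/8):ℝ)+1) / ((-(1/8):ℝ)+1)))) * M := by
        rw [← mul_assoc, ← ENNReal.ofReal_mul (Real.rpow_nonneg ht0.le α)]
    _ ≤ ENNReal.ofReal ((2 ^ ((1:ℝ)/8) / (-(2*α)+1) + (8/7) * 2 ^ (2*α)) *
          T ^ (7/8 - α : ℝ)) * M :=
        mul_le_mul_left (ENNReal.ofReal_le_ofReal
          (BilinearAux.real_final hs0 hs hα ht0 htT.le)) M
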